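/- The field ℚ(θ_k) generated over ℚ by θ_k = Σ_{y∈U_k} (ζ_p^y − 1) has degree n over ℚ; equivalently, the minimal polynomial of θ_k over ℚ has degree n = (p−1)/k. (Hence ℚ(θ_k) is the unique intermediate field of ℚ(ζ_p)/ℚ of degree n.) -/

import Mathlib

open Polynomial IntermediateField

-- Linear independence of ζ^1, ..., ζ^{p-1}: sums over subsets of nonzero residues determine the set
lemma aux_sum_pow_inj (p : ℕ) [hp : Fact p.Prime] {ζ : ℂ} (hprim : IsPrimitiveRoot ζ p)
    (S T : Finset (ZMod p)) (hS : (0 : ZMod p) ∉ S) (hT : (0 : ZMod p) ∉ T)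
    (h : ∑ j ∈ S, ζ ^ j.val = ∑ j ∈ T, ζ ^ j.val) : S = T := by
  haveI : NeZero p := ⟨hp.out.ne_zero⟩
  have hzint : IsIntegral ℚ ζ := ⟨X ^ p - 1, monic_X_pow_sub_C 1 hp.out.ne_zero, by
    simp [hprim.pow_eq_one]⟩
  have hdeg : (minpoly ℚ ζ).natDegree = p - 1 := by
    rw [← cyclotomic_eq_minpoly_rat hprim hp.out.pos, natDegree_cyclotomic,
      Nat.totient_prime hp.out]
  have li0 : LinearIndependent ℚ fun i : Fin (p - 1) => ζ ^ (i : ℕ) := by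
    rw [← hdeg]; exact linearIndependent_pow ζ
  have hζ0 : ζ ≠ 0 := by
    intro h0
    have := hprim.pow_eq_one
    rw [h0, zero_pow hp.out.ne_zero] at this
    exact zero_ne_one this
  have li1 : LinearIndependent ℚ fun i : Fin (p - 1) => ζ ^ ((i : ℕ) + 1) := by
    have hker : LinearMap.ker (LinearMap.mulLeft ℚ ζ) = ⊥ := by
      rw [LinearMap.ker_eq_bot]
      intro x y hxy
      simpa [hζ0] using hxy
    have := li0.map' (LinearMap.mulLeft ℚ ζ) hker
    rw [show (fun i : Fin (p - 1) => ζ ^ ((i : ℕ) + 1))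
        = ⇑(LinearMap.mulLeft ℚ ζ) ∘ fun i : Fin (p - 1) => ζ ^ (i : ℕ) by
      funext i
      simp [pow_succ, mul_comm]]
    exact this
  set e : {j : ZMod p // j ≠ 0} → Fin (p - 1) := fun j =>
    ⟨j.1.val - 1, by
      have h1 : j.1.val ≠ 0 := fun h0 => j.2 (by
        have := (ZMod.val_eq_zero j.1).mp h0; exact this)
      have h2 : j.1.val < p := ZMod.val_lt j.1
      omega⟩ with he
  have einj : Function.Injective e := by
    intro a b hab
    have h1 : a.1.val ≠ 0 := fun h0 => a.2 ((ZMod.val_eq_zero a.1).mp h0)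
    have h2 : b.1.val ≠ 0 := fun h0 => b.2 ((ZMod.val_eq_zero b.1).mp h0)
    have : a.1.val - 1 = b.1.val - 1 := congrArg Fin.val hab
    have : a.1.val = b.1.val := by omega
    exact Subtype.ext (ZMod.val_injective p this)
  have li2 : LinearIndependent ℚ fun j : {j : ZMod p // j ≠ 0} => ζ ^ (j.1.val) := by
    have := li1.comp e einj
    convert this using 1
    funext j
    have h1 : j.1.val ≠ 0 := fun h0 => j.2 ((ZMod.val_eq_zero j.1).mp h0)
    simp only [Function.comp, he]
    congr 1
    omega
  -- convert finset sums to subtype sums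
  have hconv : ∀ (S : Finset (ZMod p)), (0 : ZMod p) ∉ S →
      ∑ j ∈ S, ζ ^ j.val
        = ∑ j : {j : ZMod p // j ≠ 0}, (if j.1 ∈ S then (1 : ℚ) else 0) • ζ ^ (j.1.val) := by
    intro S hS0
    rw [show (∑ j : {j : ZMod p // j ≠ 0}, (if j.1 ∈ S then (1 : ℚ) else 0) • ζ ^ (j.1.val))
        = ∑ j : {j : ZMod p // j ≠ 0}, (if j.1 ∈ S then ζ ^ (j.1.val) else 0) by
      refine Finset.sum_congr rfl fun j _ => ?_
      split <;> simp]
    rw [← Finset.sum_filter]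
    refine Finset.sum_bij' (i := fun (j : ZMod p) (hj : j ∈ S) =>
        (⟨j, fun h0 => hS0 (h0 ▸ hj)⟩ : {j : ZMod p // j ≠ 0}))
      (j := fun j _ => j.1) ?_ ?_ ?_ ?_ ?_
    · intro a ha; simp [ha]
    · intro a ha; simp at ha; exact ha
    · intro a ha; rfl
    · intro a ha; rfl
    · intro a ha; rfl
  -- now use linear independence
  rw [hconv S hS, hconv T hT, ← sub_eq_zero, ← Finset.sum_sub_distrib] at h
  have h' : ∑ j : {j : ZMod p // j ≠ 0},
      ((if j.1 ∈ S then (1 : ℚ) else 0) - (if j.1 ∈ T then (1 : ℚ) else 0)) • ζ ^ (j.1.val) = 0 := by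
    rw [← h]
    exact Finset.sum_congr rfl fun j _ => (sub_smul _ _ _)
  have hcoef := Fintype.linearIndependent_iff.mp li2 _ h'
  ext x
  by_cases hx : x = 0
  · subst hx; simp [hS, hT]
  · have := hcoef ⟨x, hx⟩
    by_cases h1 : x ∈ S <;> by_cases h2 : x ∈ T <;> simp [h1, h2] at this ⊢


-- Counting: if the fibers of g are the left cosets of the k-th roots of unity, the range has
-- (p-1)/k elements.
lemma aux_count (p k : ℕ) [hp : Fact p.Prime] (hk0 : 0 < k) (hkd : k ∣ p - 1)
    (g : (ZMod p)ˣ → ℂ)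
    (hg : ∀ a b : (ZMod p)ˣ, g a = g b ↔ a⁻¹ * b ∈ rootsOfUnity k (ZMod p)) :
    Nat.card (Set.range g) = (p - 1) / k := by
  haveI : NeZero p := ⟨hp.out.ne_zero⟩
  haveI : NeZero k := ⟨hk0.ne'⟩
  set U : Subgroup (ZMod p)ˣ := rootsOfUnity k (ZMod p) with hU
  -- the map from the quotient
  have hlift : ∀ a b : (ZMod p)ˣ, (QuotientGroup.leftRel U) a b → g a = g b := by
    intro a b hab
    exact (hg a b).mpr ((QuotientGroup.leftRel_apply).mp hab)
  let gbar : ((ZMod p)ˣ ⧸ U) → Set.range g := fun q =>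
    Quotient.liftOn' q (fun a => ⟨g a, Set.mem_range_self a⟩)
      (fun a b hab => Subtype.ext (hlift a b hab))
  have hbij : Function.Bijective gbar := by
    constructor
    · intro q1 q2
      induction q1 using Quotient.inductionOn'
      induction q2 using Quotient.inductionOn'
      intro hq
      refine Quotient.sound' ?_
      rw [QuotientGroup.leftRel_apply]
      exact (hg _ _).mp (congrArg Subtype.val hq)
    · rintro ⟨_, a, rfl⟩
      exact ⟨Quotient.mk'' a, rfl⟩
  have hcard1 : Nat.card (Set.range g) = U.index := by
    rw [Subgroup.index]
    exact (Nat.card_congr (Equiv.ofBijective gbar hbij)).symm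
  -- card of U is k
  obtain ⟨g0, hg0⟩ := IsCyclic.exists_generator (α := (ZMod p)ˣ)
  have horder : orderOf g0 = p - 1 := by
    rw [orderOf_eq_card_of_forall_mem_zpowers hg0, Nat.card_eq_fintype_card,
      ZMod.card_units_eq_totient, Nat.totient_prime hp.out]
  have hprim : IsPrimitiveRoot g0 (p - 1) := horder ▸ IsPrimitiveRoot.orderOf g0
  have hp1pos : 0 < p - 1 := Nat.sub_pos_of_lt hp.out.one_lt
  have hprimk : IsPrimitiveRoot (g0 ^ ((p - 1) / k)) k :=
    hprim.pow hp1pos (Nat.div_mul_cancel hkd).symm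
  have hcardU : Nat.card U = k := by
    exact hprimk.card_rootsOfUnity'
  have hIdx := Subgroup.index_mul_card U
  rw [hcardU, Nat.card_eq_fintype_card, ZMod.card_units_eq_totient, Nat.totient_prime hp.out]
    at hIdx
  rw [hcard1]
  have h2 : (p - 1) / k * k = p - 1 := Nat.div_mul_cancel hkd
  exact Nat.eq_of_mul_eq_mul_right hk0 (hIdx.trans h2.symm)


/-- The field `ℚ(θ_k)` has degree `n = (p-1)/k` over `ℚ`; equivalently,
the minimal polynomial of `θ_k = ∑_{y ∈ U_k} (ζ_p^y - 1)` over `ℚ` has degree `n`. -/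
theorem minpoly_theta_natDegree (p : ℕ) [Fact p.Prime] (hp : Odd p)
    (k : ℕ) (hk1 : 1 ≤ k) (hk2 : k < p - 1) (hkd : k ∣ p - 1)
    (n : ℕ) (hn : n = (p - 1) / k)
    (ζ : ℂ) (hζ : ζ = Complex.exp (2 * Real.pi * Complex.I / p))
    (θ : ℂ)
    (hθ : θ = ∑ y ∈ Finset.univ.filter (fun y : ZMod p => y ^ k = 1), (ζ ^ y.val - 1)) :
    (minpoly ℚ θ).natDegree = n := by
  have pp : p.Prime := Fact.out
  haveI : NeZero p := ⟨pp.ne_zero⟩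
  have hprim : IsPrimitiveRoot ζ p := hζ ▸ Complex.isPrimitiveRoot_exp p pp.ne_zero
  set p' : ℕ+ := ⟨p, pp.pos⟩ with hp'
  set U : Finset (ZMod p) := Finset.univ.filter (fun y : ZMod p => y ^ k = 1) with hUdef
  have hzint : IsIntegral ℚ ζ := ⟨Polynomial.X ^ p - 1, Polynomial.monic_X_pow_sub_C 1 pp.ne_zero,
    by simp [hprim.pow_eq_one]⟩
  set K := ℚ⟮ζ⟯ with hK
  set z : K := IntermediateField.AdjoinSimple.gen ℚ ζ with hzdef
  have hz : algebraMap K ℂ z = ζ := rfl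
  have hinj : Function.Injective (algebraMap K ℂ) := (algebraMap K ℂ).injective
  have hzprim : IsPrimitiveRoot z p :=
    IsPrimitiveRoot.of_map_of_injective (by rwa [hz]) hinj
  haveI hcyc : IsCyclotomicExtension {(p' : ℕ)} ℚ K := by
    have H := IntermediateField.adjoin_simple_toSubalgebra_of_isAlgebraic hzint.isAlgebraic
    refine IsCyclotomicExtension.equiv _ _ _ (h := ?_) (.refl : K.toSubalgebra ≃ₐ[ℚ] _)
    rw [H]
    have hprim' : IsPrimitiveRoot ζ (p' : ℕ) := hprim
    exact hprim'.adjoin_isCyclotomicExtension ℚ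
  haveI : IsGalois ℚ K := IsCyclotomicExtension.isGalois {(p' : ℕ)} ℚ K
  haveI : FiniteDimensional ℚ K := IsCyclotomicExtension.finiteDimensional {(p' : ℕ)} ℚ K
  set θ' : K := ∑ y ∈ U, (z ^ y.val - 1) with hθ'def
  have hθmap : algebraMap K ℂ θ' = θ := by
    rw [hθ, hθ'def, map_sum]
    exact Finset.sum_congr rfl fun y _ => by rw [map_sub, map_pow, hz, map_one]
  have hmeq : minpoly ℚ θ = minpoly ℚ θ' := by
    rw [← hθmap]
    exact minpoly.algebraMap_eq hinj θ'
  have hθint : IsIntegral ℚ θ' := IsIntegral.of_finite ℚ θ'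
  have hsep : (minpoly ℚ θ').Separable := (minpoly.irreducible hθint).separable
  set g : (ZMod p)ˣ → ℂ := fun a => ∑ y ∈ U, (ζ ^ ((a : ZMod p) * y).val - 1) with hgdef
  -- the key computation
  have key : ∀ (σ : K ≃ₐ[ℚ] K) (a : (ZMod p)ˣ), σ z = z ^ ((a : ZMod p)).val →
      algebraMap K ℂ (σ θ') = g a := by
    intro σ a hσz
    rw [hθ'def, map_sum, map_sum, hgdef]
    refine Finset.sum_congr rfl fun y _ => ?_
    rw [map_sub, map_pow, hσz, map_one, ← pow_mul,
      pow_eq_pow_mod _ hzprim.pow_eq_one, ← ZMod.val_mul, map_sub, map_pow, hz, map_one]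
  -- root set = range of g
  have hroots : (minpoly ℚ θ').rootSet ℂ = Set.range g := by
    apply Set.eq_of_subset_of_subset
    · -- every complex root comes from a Galois conjugate
      intro r hr
      have hsplitsK : ((minpoly ℚ θ').map (algebraMap ℚ K)).Splits := Normal.splits inferInstance θ'
      rw [← Polynomial.Splits.image_rootSet hsplitsK (IsScalarTower.toAlgHom ℚ K ℂ)] at hr
      obtain ⟨r', hr', rfl⟩ := hr
      have hconj : IsConjRoot ℚ θ' r' :=
        (isConjRoot_iff_mem_minpoly_rootSet hθint).mpr hr'
      obtain ⟨σ, hσ⟩ := hconj.exists_algEquiv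
      -- σ r' = θ', so σ.symm θ' = r'
      have hσ' : σ.symm θ' = r' := by rw [← hσ, AlgEquiv.symm_apply_apply]
      -- analyze σ.symm z
      have hw : (σ.symm z) ^ p = 1 := by rw [← map_pow, hzprim.pow_eq_one, map_one]
      obtain ⟨m, hmlt, hmz⟩ := hzprim.eq_pow_of_pow_eq_one hw
      have hm0 : m ≠ 0 := by
        intro h0
        rw [h0, pow_zero] at hmz
        exact hzprim.ne_one pp.one_lt (σ.symm.injective (by rw [← hmz, map_one]))
      have hcop : Nat.Coprime p m := (Nat.Prime.coprime_iff_not_dvd pp).mpr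
        (fun hdvd => hm0 (by
          rcases Nat.eq_zero_or_pos m with h | h
          · exact h
          · exact absurd (Nat.le_of_dvd h hdvd) (by omega)))
      set a : (ZMod p)ˣ := ZMod.unitOfCoprime m hcop.symm with hadef
      have haval : ((a : ZMod p)).val = m := by
        rw [hadef, ZMod.coe_unitOfCoprime, ZMod.val_natCast, Nat.mod_eq_of_lt hmlt]
      have hσz : σ.symm z = z ^ ((a : ZMod p)).val := by rw [haval, hmz]
      refine ⟨a, ?_⟩
      rw [← key σ.symm a hσz, hσ']
      rfl
    · rintro _ ⟨a, rfl⟩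
      have hcop := ZMod.val_coe_unit_coprime a
      have hpowprim : IsPrimitiveRoot (z ^ ((a : ZMod p)).val) p := hzprim.pow_of_coprime _ hcop
      have h1 : minpoly ℚ z = Polynomial.cyclotomic p ℚ :=
        (Polynomial.cyclotomic_eq_minpoly_rat hzprim pp.pos).symm
      have h2 : minpoly ℚ (z ^ ((a : ZMod p)).val) = Polynomial.cyclotomic p ℚ :=
        (Polynomial.cyclotomic_eq_minpoly_rat hpowprim pp.pos).symm
      have hconj : IsConjRoot ℚ (z ^ ((a : ZMod p)).val) z := isConjRoot_def.mpr (h2.trans h1.symm)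
      obtain ⟨σ, hσ⟩ := hconj.exists_algEquiv
      rw [Polynomial.mem_rootSet]
      refine ⟨minpoly.ne_zero hθint, ?_⟩
      rw [← key σ a hσ, Polynomial.aeval_algebraMap_apply,
        ← minpoly.algEquiv_eq σ θ', minpoly.aeval, map_zero]
  -- membership facts about U
  have hUmem : ∀ y : ZMod p, y ∈ U ↔ y ^ k = 1 := fun y => by simp [hUdef]
  have h1U : (1 : ZMod p) ∈ U := (hUmem 1).mpr (one_pow k)
  have hU0 : (0 : ZMod p) ∉ U := fun h => by
    have h' := (hUmem 0).mp h
    rw [zero_pow (by omega : k ≠ 0)] at h'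
    exact zero_ne_one h'
  have hmulinj : ∀ c : (ZMod p)ˣ, Function.Injective (fun y : ZMod p => (c : ZMod p) * y) :=
    fun c => mul_right_injective₀ (Units.ne_zero c)
  have himg0 : ∀ c : (ZMod p)ˣ, (0 : ZMod p) ∉ U.image (fun y => (c : ZMod p) * y) := by
    intro c h
    obtain ⟨y, hy, hy0⟩ := Finset.mem_image.mp h
    have : y = 0 := by
      have := mul_eq_zero.mp hy0
      rcases this with h' | h'
      · exact absurd h' (Units.ne_zero c)
      · exact h'
    exact hU0 (this ▸ hy)
  have hsumimg : ∀ c : (ZMod p)ˣ, ∑ y ∈ U, ζ ^ (((c : ZMod p)) * y).val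
      = ∑ j ∈ U.image (fun y => (c : ZMod p) * y), ζ ^ j.val := by
    intro c
    rw [Finset.sum_image (fun x _ y _ h => hmulinj c h)]
  have himgU : ∀ u : (ZMod p)ˣ, ((u : ZMod p)) ^ k = 1 →
      U.image (fun y => (u : ZMod p) * y) = U := by
    intro u hu
    apply Finset.eq_of_subset_of_card_le
    · intro x hx
      obtain ⟨y, hy, rfl⟩ := Finset.mem_image.mp hx
      rw [hUmem] at hy ⊢
      rw [mul_pow, hu, hy, one_mul]
    · exact le_of_eq (Finset.card_image_of_injective U (hmulinj u)).symm
  have hgsplit : ∀ c : (ZMod p)ˣ, g c = (∑ y ∈ U, ζ ^ (((c : ZMod p)) * y).val) - U.card := by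
    intro c
    have hc : g c = ∑ y ∈ U, (ζ ^ (((c : ZMod p)) * y).val - 1) := rfl
    rw [hc, Finset.sum_sub_distrib]
    simp
  -- fibers of g are cosets
  have hij : ∀ a b : (ZMod p)ˣ, g a = g b ↔ a⁻¹ * b ∈ rootsOfUnity k (ZMod p) := by
    intro a b
    constructor
    · intro hab
      rw [hgsplit a, hgsplit b, sub_left_inj, hsumimg a, hsumimg b] at hab
      have hTT := aux_sum_pow_inj p hprim _ _ (himg0 a) (himg0 b) hab
      have hmem : (a : ZMod p) ∈ U.image (fun y => (b : ZMod p) * y) := by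
        rw [← hTT]
        exact Finset.mem_image.mpr ⟨1, h1U, mul_one _⟩
      obtain ⟨y, hy, hby⟩ := Finset.mem_image.mp hmem
      have hy' : ((b⁻¹ * a : (ZMod p)ˣ) : ZMod p) = y := by
        rw [Units.val_mul, ← hby, ← mul_assoc, ← Units.val_mul, inv_mul_cancel, Units.val_one,
          one_mul]
      have hbak : (b⁻¹ * a) ^ k = 1 := by
        apply Units.ext
        rw [Units.val_pow_eq_pow_val, hy', Units.val_one]
        exact (hUmem y).mp hy
      rw [mem_rootsOfUnity]
      have hrw : a⁻¹ * b = (b⁻¹ * a)⁻¹ := by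
        rw [mul_inv_rev, inv_inv]
      rw [hrw, inv_pow, hbak, inv_one]
    · intro hab
      rw [mem_rootsOfUnity] at hab
      have huk : ((a⁻¹ * b : (ZMod p)ˣ) : ZMod p) ^ k = 1 := by
        rw [← Units.val_pow_eq_pow_val, hab, Units.val_one]
      have hbu : (b : ZMod p) = (a : ZMod p) * ((a⁻¹ * b : (ZMod p)ˣ) : ZMod p) := by
        rw [← Units.val_mul, ← mul_assoc, mul_inv_cancel, one_mul]
      rw [hgsplit a, hgsplit b, sub_left_inj]
      calc ∑ y ∈ U, ζ ^ (((a : ZMod p)) * y).val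
          = ∑ y ∈ U.image (fun y => ((a⁻¹ * b : (ZMod p)ˣ) : ZMod p) * y),
              ζ ^ (((a : ZMod p)) * y).val := by rw [himgU _ huk]
        _ = ∑ y ∈ U, ζ ^ (((a : ZMod p)) * (((a⁻¹ * b : (ZMod p)ˣ) : ZMod p) * y)).val :=
            Finset.sum_image (fun x _ y _ h => hmulinj _ h)
        _ = ∑ y ∈ U, ζ ^ (((b : ZMod p)) * y).val := by
            refine Finset.sum_congr rfl fun y _ => ?_
            rw [← mul_assoc, ← hbu]
  -- conclusion
  rw [hmeq, hn, ← aux_count p k hk1 hkd g hij]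
  calc (minpoly ℚ θ').natDegree
      = Fintype.card ((minpoly ℚ θ').rootSet ℂ) :=
        (Polynomial.card_rootSet_eq_natDegree hsep (IsAlgClosed.splits _)).symm
    _ = Nat.card ((minpoly ℚ θ').rootSet ℂ) := (Nat.card_eq_fintype_card).symm
    _ = Nat.card (Set.range g) := by rw [hroots]
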